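/- Let k ≥ 1 and let ℓ be an integer with gcd(ℓ, k+2) = 1; set s := i·exp(πiℓ/(2(k+2))) ∈ ℂ. Then the quantum twist of the nontrivial invertible object X_k, namely θ := (−1)^k·s^{k(k+2)}, satisfies θ = (−1)^k·i^{k(k+ℓ+2)}, and explicitly: θ = 1 if k ≡ 0 (mod 4), or k ≡ 1 and ℓ ≡ 3 (mod 4), or k ≡ 3 and ℓ ≡ 1 (mod 4); θ = −1 if k ≡ 2 (mod 4), or k ≡ 1 and ℓ ≡ 1 (mod 4), or k ≡ 3 and ℓ ≡ 3 (mod 4); θ = i if k is odd and ℓ ≡ 0 (mod 4); and θ = −i if k is odd and ℓ ≡ 2 (mod 4). (Since the braided categories with A₂ fusion rules, Rep(ℤ/2ℤ), sVec, Sem and its conjugate, are distinguished by the twists 1, −1, i, −i of their nontrivial objects, this identifies the maximal pointed subcategory of C^br_{k,ℓ}: in particular it is Rep(ℤ/2ℤ) whenever k ≡ 0 (mod 4) and sVec whenever k ≡ 2 (mod 4).) -/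

import Mathlib

lemma Ifour : Complex.I ^ (4 : ℤ) = 1 := by
  have : Complex.I ^ (4 : ℤ) = Complex.I ^ (4 : ℕ) := zpow_natCast _ _
  rw [this, pow_succ, pow_succ, pow_succ, pow_succ, pow_zero, one_mul, Complex.I_mul_I]
  simp [Complex.I_mul_I]

lemma Ipow (q r : ℤ) : Complex.I ^ (4 * q + r) = Complex.I ^ r := by
  rw [zpow_add₀ Complex.I_ne_zero, zpow_mul, Ifour, one_zpow, one_mul]

lemma I0 : Complex.I ^ (0 : ℤ) = 1 := zpow_zero _
lemma I1 : Complex.I ^ (1 : ℤ) = Complex.I := zpow_one _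
lemma I2 : Complex.I ^ (2 : ℤ) = -1 := by
  rw [show (2:ℤ) = ((2:ℕ):ℤ) from rfl, zpow_natCast, sq, Complex.I_mul_I]
lemma I3 : Complex.I ^ (3 : ℤ) = -Complex.I := by
  rw [show (3:ℤ) = 2 + 1 from rfl, zpow_add₀ Complex.I_ne_zero, I2, zpow_one]
  ring

lemma expI : Complex.exp ((Real.pi : ℂ) / 2 * Complex.I) = Complex.I := by
  have h : ((Real.pi : ℂ) / 2) = ((Real.pi / 2 : ℝ) : ℂ) := by push_cast; ring
  rw [h, Complex.exp_mul_I, ← Complex.ofReal_cos, ← Complex.ofReal_sin,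
    Real.cos_pi_div_two, Real.sin_pi_div_two]
  simp

theorem stmt12 (k : ℕ) (hk : 1 ≤ k) (ℓ : ℤ) (hl : Int.gcd ℓ ((k : ℤ) + 2) = 1)
    (s : ℂ)
    (hs : s = Complex.I * Complex.exp ((Real.pi : ℂ) * Complex.I * (ℓ : ℂ) / (2 * ((k : ℂ) + 2))))
    (θ : ℂ) (hθ : θ = (-1) ^ k * s ^ (k * (k + 2))) :
    θ = (-1) ^ k * Complex.I ^ ((k : ℤ) * ((k : ℤ) + ℓ + 2)) ∧
      (k % 4 = 0 → θ = 1) ∧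
      (k % 4 = 1 ∧ ℓ % 4 = 3 → θ = 1) ∧
      (k % 4 = 3 ∧ ℓ % 4 = 1 → θ = 1) ∧
      (k % 4 = 2 → θ = -1) ∧
      (k % 4 = 1 ∧ ℓ % 4 = 1 → θ = -1) ∧
      (k % 4 = 3 ∧ ℓ % 4 = 3 → θ = -1) ∧
      (Odd k ∧ ℓ % 4 = 0 → θ = Complex.I) ∧
      (Odd k ∧ ℓ % 4 = 2 → θ = -Complex.I) := by
  have hk2 : ((k : ℂ) + 2) ≠ 0 := by
    have h : ((k : ℂ) + 2) = (((k : ℝ) + 2 : ℝ) : ℂ) := by push_cast; ring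
    rw [h, Complex.ofReal_ne_zero]
    positivity
  have main : θ = (-1) ^ k * Complex.I ^ ((k : ℤ) * ((k : ℤ) + ℓ + 2)) := by
    rw [hθ, hs, mul_pow, ← Complex.exp_nat_mul]
    have h1 : ((k * (k + 2) : ℕ) : ℂ) * ((Real.pi : ℂ) * Complex.I * (ℓ : ℂ) / (2 * ((k : ℂ) + 2)))
        = ((ℓ * (k : ℤ) : ℤ) : ℂ) * ((Real.pi : ℂ) / 2 * Complex.I) := by
      field_simp
      push_cast
      ring
    rw [h1, Complex.exp_int_mul, expI]
    rw [show Complex.I ^ (k * (k + 2)) = Complex.I ^ ((k * (k + 2) : ℕ) : ℤ) from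
      (zpow_natCast _ _).symm, ← zpow_add₀ Complex.I_ne_zero]
    congr 2
    push_cast
    ring
  refine ⟨main, ?_, ?_, ?_, ?_, ?_, ?_, ?_, ?_⟩
  · intro h
    obtain ⟨a, ha⟩ : ∃ a : ℤ, (k : ℤ) = 4 * a := ⟨(k : ℤ) / 4, by omega⟩
    have he : (k : ℤ) * ((k : ℤ) + ℓ + 2) = 4 * (a * (4 * a + ℓ + 2)) + 0 := by rw [ha]; ring
    have hev : Even k := Nat.even_iff.mpr (by omega)
    rw [main, he, Ipow, I0, hev.neg_one_pow]; ring
  · rintro ⟨h1, h2⟩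
    obtain ⟨a, ha⟩ : ∃ a : ℤ, (k : ℤ) = 4 * a + 1 := ⟨(k : ℤ) / 4, by omega⟩
    obtain ⟨b, hb⟩ : ∃ b : ℤ, ℓ = 4 * b + 3 := ⟨ℓ / 4, by omega⟩
    have he : (k : ℤ) * ((k : ℤ) + ℓ + 2) = 4 * (4*a*a + 4*a*b + 7*a + b + 1) + 2 := by
      rw [ha, hb]; ring
    have hod : Odd k := Nat.odd_iff.mpr (by omega)
    rw [main, he, Ipow, I2, hod.neg_one_pow]; ring
  · rintro ⟨h1, h2⟩
    obtain ⟨a, ha⟩ : ∃ a : ℤ, (k : ℤ) = 4 * a + 3 := ⟨(k : ℤ) / 4, by omega⟩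
    obtain ⟨b, hb⟩ : ∃ b : ℤ, ℓ = 4 * b + 1 := ⟨ℓ / 4, by omega⟩
    have he : (k : ℤ) * ((k : ℤ) + ℓ + 2) = 4 * (4*a*a + 4*a*b + 9*a + 3*b + 4) + 2 := by
      rw [ha, hb]; ring
    have hod : Odd k := Nat.odd_iff.mpr (by omega)
    rw [main, he, Ipow, I2, hod.neg_one_pow]; ring
  · intro h
    obtain ⟨a, ha⟩ : ∃ a : ℤ, (k : ℤ) = 4 * a + 2 := ⟨(k : ℤ) / 4, by omega⟩
    have hlo : ℓ % 2 = 1 := by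
      rcases Int.emod_two_eq ℓ with h2 | h2
      · exfalso
        have d1 : (2:ℤ) ∣ ℓ := Int.dvd_of_emod_eq_zero h2
        have d2 : (2:ℤ) ∣ ((k:ℤ) + 2) := by omega
        have h2d : (2:ℤ) ∣ (Int.gcd ℓ ((k:ℤ)+2) : ℤ) := Int.dvd_coe_gcd d1 d2
        rw [hl] at h2d
        norm_num at h2d
      · exact h2
    obtain ⟨b, hb⟩ : ∃ b : ℤ, ℓ = 2 * b + 1 := ⟨ℓ / 2, by omega⟩
    have he : (k : ℤ) * ((k : ℤ) + ℓ + 2) = 4 * (4*a*a + 2*a*b + 7*a + b + 2) + 2 := by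
      rw [ha, hb]; ring
    have hev : Even k := Nat.even_iff.mpr (by omega)
    rw [main, he, Ipow, I2, hev.neg_one_pow]; ring
  · rintro ⟨h1, h2⟩
    obtain ⟨a, ha⟩ : ∃ a : ℤ, (k : ℤ) = 4 * a + 1 := ⟨(k : ℤ) / 4, by omega⟩
    obtain ⟨b, hb⟩ : ∃ b : ℤ, ℓ = 4 * b + 1 := ⟨ℓ / 4, by omega⟩
    have he : (k : ℤ) * ((k : ℤ) + ℓ + 2) = 4 * (4*a*a + 4*a*b + 5*a + b + 1) + 0 := by
      rw [ha, hb]; ring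
    have hod : Odd k := Nat.odd_iff.mpr (by omega)
    rw [main, he, Ipow, I0, hod.neg_one_pow]; ring
  · rintro ⟨h1, h2⟩
    obtain ⟨a, ha⟩ : ∃ a : ℤ, (k : ℤ) = 4 * a + 3 := ⟨(k : ℤ) / 4, by omega⟩
    obtain ⟨b, hb⟩ : ∃ b : ℤ, ℓ = 4 * b + 3 := ⟨ℓ / 4, by omega⟩
    have he : (k : ℤ) * ((k : ℤ) + ℓ + 2) = 4 * (4*a*a + 4*a*b + 11*a + 3*b + 6) + 0 := by
      rw [ha, hb]; ring
    have hod : Odd k := Nat.odd_iff.mpr (by omega)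
    rw [main, he, Ipow, I0, hod.neg_one_pow]; ring
  · rintro ⟨h1, h2⟩
    have hodn : k % 2 = 1 := Nat.odd_iff.mp h1
    obtain ⟨a, ha⟩ : ∃ a : ℤ, (k : ℤ) = 2 * a + 1 := ⟨(k : ℤ) / 2, by omega⟩
    obtain ⟨b, hb⟩ : ∃ b : ℤ, ℓ = 4 * b := ⟨ℓ / 4, by omega⟩
    have he : (k : ℤ) * ((k : ℤ) + ℓ + 2) = 4 * (a*a + 2*a*b + 2*a + b) + 3 := by
      rw [ha, hb]; ring
    rw [main, he, Ipow, I3, h1.neg_one_pow]; ring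
  · rintro ⟨h1, h2⟩
    have hodn : k % 2 = 1 := Nat.odd_iff.mp h1
    obtain ⟨a, ha⟩ : ∃ a : ℤ, (k : ℤ) = 2 * a + 1 := ⟨(k : ℤ) / 2, by omega⟩
    obtain ⟨b, hb⟩ : ∃ b : ℤ, ℓ = 4 * b + 2 := ⟨ℓ / 4, by omega⟩
    have he : (k : ℤ) * ((k : ℤ) + ℓ + 2) = 4 * (a*a + 2*a*b + 3*a + b + 1) + 1 := by
      rw [ha, hb]; ring
    rw [main, he, Ipow, I1, h1.neg_one_pow]; ring
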